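/- arXiv:2303.16746 — 2 statements merged into one kernel-verified Lean document; each statement's English description precedes it below -/
import Mathlib

section
/- In the LQR Riccati recursion, if P_{k+1} is positive semidefinite, R_k is positive definite, and the stage cost matrix [[R_k, S_kᵀ],[S_k, Q_k]] is positive semidefinite, then R_k + B_kᵀP_{k+1}B_k is positive definite and P_k (given by the Riccati update) is positive semidefinite. -/
open Matrix

/-- In the LQR Riccati recursion, if `P_{k+1}` is positive semidefinite, `R_k` is
positive definite and the stage cost matrix `[[R_k, Sₖᵀ],[Sₖ, Q_k]]` is positive
semidefinite, then `R_k + BₖᵀP_{k+1}Bₖ` is positive definite and the Riccati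
update `P_k` is positive semidefinite. -/
theorem riccati_update_psd (nx nu : ℕ)
    (R : Matrix (Fin nu) (Fin nu) ℝ) (S : Matrix (Fin nu) (Fin nx) ℝ)
    (Q P A : Matrix (Fin nx) (Fin nx) ℝ) (B : Matrix (Fin nx) (Fin nu) ℝ)
    (hP : P.PosSemidef) (hR : R.PosDef)
    (hstage : (Matrix.fromBlocks R S Sᵀ Q).PosSemidef) :
    (R + Bᵀ * P * B).PosDef ∧
    (Q + Aᵀ * P * A
      - (Sᵀ + Aᵀ * P * B) * (R + Bᵀ * P * B)⁻¹ * (S + Bᵀ * P * A)).PosSemidef := by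
  have hPt : Pᵀ = P := by
    have := hP.isHermitian
    rwa [Matrix.IsHermitian, conjTranspose_eq_transpose_of_trivial] at this
  -- The outer-product block matrix is PSD
  have hG : ((fromCols B A)ᴴ * P * fromCols B A).PosSemidef :=
    hP.conjTranspose_mul_mul_same _
  have hGeq : (fromCols B A)ᴴ * P * fromCols B A
      = fromBlocks (Bᵀ * P * B) (Bᵀ * P * A) (Aᵀ * P * B) (Aᵀ * P * A) := by
    rw [conjTranspose_eq_transpose_of_trivial, transpose_fromCols, fromRows_mul,
      fromRows_mul_fromCols]
  rw [hGeq] at hG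
  have hsum := hstage.add hG
  rw [Matrix.fromBlocks_add] at hsum
  have hBPB : (Bᵀ * P * B).PosSemidef := by
    have := hP.conjTranspose_mul_mul_same B
    rwa [conjTranspose_eq_transpose_of_trivial] at this
  have hM : (R + Bᵀ * P * B).PosDef := hR.add_posSemidef hBPB
  refine ⟨hM, ?_⟩
  have hNt : Sᵀ + Aᵀ * P * B = (S + Bᵀ * P * A)ᴴ := by
    rw [conjTranspose_eq_transpose_of_trivial]
    simp [Matrix.transpose_mul, hPt, Matrix.mul_assoc]
  rw [hNt] at hsum ⊢
  haveI := hM.isUnit.invertible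
  exact (PosDef.fromBlocks₁₁ _ _ hM).mp hsum
end

section
/- Exactness of the L1 penalty: let x* be a local minimizer of min f(x) s.t. c(x) ≤ 0 satisfying suitable constraint qualification with Lagrange multipliers λ* ≥ 0. For a convex problem (f convex, c componentwise convex), if ρ > ‖λ*‖_∞ then every global minimizer of the penalized problem min f(x) + ρ Σᵢ max(cᵢ(x), 0) is feasible for the original problem and is a global minimizer of it. -/
/-- Gradient inequality for convex differentiable functions. -/
lemma convex_grad_ineq {n : ℕ} {g : (Fin n → ℝ) → ℝ}
    (hconv : ConvexOn ℝ Set.univ g) (hdiff : Differentiable ℝ g)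
    (x z : Fin n → ℝ) : g x + fderiv ℝ g x (z - x) ≤ g z := by
  set v := z - x with hv
  have hline : HasDerivAt (fun t : ℝ => x + t • v) v 0 := by
    simpa using ((hasDerivAt_id (0 : ℝ)).smul_const v).const_add x
  have hφ : HasDerivAt (fun t : ℝ => g (x + t • v)) (fderiv ℝ g x v) 0 := by
    have h0 : x + (0 : ℝ) • v = x := by simp
    have hgx : HasFDerivAt g (fderiv ℝ g x) (x + (0 : ℝ) • v) := by
      rw [h0]; exact (hdiff x).hasFDerivAt
    have := hgx.comp_hasDerivAt 0 hline
    exact this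
  have hφconv : ConvexOn ℝ Set.univ (fun t : ℝ => g (x + t • v)) := by
    have := hconv.comp_affineMap
      (AffineMap.lineMap x z : ℝ →ᵃ[ℝ] (Fin n → ℝ))
    have heq : (g ∘ (AffineMap.lineMap x z : ℝ →ᵃ[ℝ] (Fin n → ℝ)))
        = fun t : ℝ => g (x + t • v) := by
      funext t
      show g _ = g _
      congr 1
      simp [AffineMap.lineMap_apply, vsub_eq_sub, vadd_eq_add, hv]
      abel
    rw [heq] at this
    simpa using this
  have := hφconv.le_slope_of_hasDerivAt (Set.mem_univ (0 : ℝ))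
    (Set.mem_univ (1 : ℝ)) one_pos hφ
  have hs : slope (fun t : ℝ => g (x + t • v)) 0 1 = g z - g x := by
    have h1 : x + v = z := by rw [hv]; abel
    have h0 : x + (0 : ℝ) • v = x := by simp
    simp [slope_def_field, h1, h0]
  rw [hs] at this
  linarith

/-- Exactness of the L1 penalty for convex problems: if `x*` satisfies the KKT
conditions of `min f(x) s.t. c(x) ≤ 0` with multipliers `λ* ≥ 0`, `f` and each
`cᵢ` are convex and differentiable, and `ρ > ‖λ*‖_∞`, then every global
minimizer of `f(x) + ρ Σᵢ max(cᵢ(x), 0)` is feasible for the original problem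
and is a global minimizer of it. -/
theorem l1_penalty_exactness (n m : ℕ)
    (f : (Fin n → ℝ) → ℝ) (c : (Fin n → ℝ) → Fin m → ℝ)
    (hfconv : ConvexOn ℝ Set.univ f)
    (hcconv : ∀ i, ConvexOn ℝ Set.univ (fun x => c x i))
    (hfdiff : Differentiable ℝ f)
    (hcdiff : ∀ i, Differentiable ℝ (fun x => c x i))
    (xs : Fin n → ℝ) (lam : Fin m → ℝ)
    (hlamnn : ∀ i, 0 ≤ lam i)
    (hfeas : ∀ i, c xs i ≤ 0)
    (hcomp : ∀ i, lam i * c xs i = 0)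
    (hstat : fderiv ℝ f xs + ∑ i, lam i • fderiv ℝ (fun x => c x i) xs = 0)
    (ρ : ℝ) (hρ : ∀ i, lam i < ρ) :
    ∀ y : Fin n → ℝ,
      (∀ x : Fin n → ℝ,
        f y + ρ * ∑ i, max (c y i) 0 ≤ f x + ρ * ∑ i, max (c x i) 0) →
      (∀ i, c y i ≤ 0) ∧
      ∀ x : Fin n → ℝ, (∀ i, c x i ≤ 0) → f y ≤ f x := by
  -- key Lagrangian inequality: ∀ x, f xs ≤ f x + ∑ lam i * c x i
  have key : ∀ x : Fin n → ℝ, f xs ≤ f x + ∑ i, lam i * c x i := by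
    intro x
    have hzero : (fderiv ℝ f xs) (x - xs)
        + ∑ i, lam i * (fderiv ℝ (fun x => c x i) xs) (x - xs) = 0 := by
      have := congrArg (fun L : (Fin n → ℝ) →L[ℝ] ℝ => L (x - xs)) hstat
      simpa [ContinuousLinearMap.sum_apply] using this
    have hf := convex_grad_ineq hfconv hfdiff xs x
    have hc : ∀ i, lam i * (fderiv ℝ (fun x => c x i) xs) (x - xs)
        ≤ lam i * c x i := by
      intro i
      have := convex_grad_ineq (hcconv i) (hcdiff i) xs x
      have h2 : c xs i + (fderiv ℝ (fun x => c x i) xs) (x - xs) ≤ c x i := this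
      calc lam i * (fderiv ℝ (fun x => c x i) xs) (x - xs)
          = lam i * (c xs i + (fderiv ℝ (fun x => c x i) xs) (x - xs)) := by
            rw [mul_add, hcomp i]; ring
        _ ≤ lam i * c x i := mul_le_mul_of_nonneg_left h2 (hlamnn i)
    have hsum : (∑ i, lam i * (fderiv ℝ (fun x => c x i) xs) (x - xs))
        ≤ ∑ i, lam i * c x i := Finset.sum_le_sum (fun i _ => hc i)
    linarith [hf, hsum]
  -- each term bound: lam i * c x i ≤ ρ * max (c x i) 0
  have term_le : ∀ (x : Fin n → ℝ) (i : Fin m),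
      lam i * c x i ≤ ρ * max (c x i) 0 := by
    intro x i
    rcases le_or_gt (c x i) 0 with h | h
    · have : lam i * c x i ≤ 0 := mul_nonpos_of_nonneg_of_nonpos (hlamnn i) h
      simpa [max_eq_right h] using this
    · rw [max_eq_left h.le]
      exact mul_le_mul_of_nonneg_right (hρ i).le h.le
  have hPxs : ∑ i, max (c xs i) 0 = 0 :=
    Finset.sum_eq_zero fun i _ => max_eq_right (hfeas i)
  intro y hy
  have hy_xs := hy xs
  rw [hPxs, mul_zero, add_zero] at hy_xs
  have keyy := key y
  -- feasibility
  have hyfeas : ∀ i, c y i ≤ 0 := by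
    intro j
    by_contra hcj
    push_neg at hcj
    have hlt : ∑ i, lam i * c y i < ∑ i, ρ * max (c y i) 0 := by
      refine Finset.sum_lt_sum (fun i _ => term_le y i) ⟨j, Finset.mem_univ j, ?_⟩
      rw [max_eq_left hcj.le]
      exact mul_lt_mul_of_pos_right (hρ j) hcj
    rw [← Finset.mul_sum] at hlt
    linarith
  constructor
  · exact hyfeas
  · intro x hxfeas
    have hPy : ∑ i, max (c y i) 0 = 0 :=
      Finset.sum_eq_zero fun i _ => max_eq_right (hyfeas i)
    have hPx : ∑ i, max (c x i) 0 = 0 :=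
      Finset.sum_eq_zero fun i _ => max_eq_right (hxfeas i)
    have := hy x
    rw [hPy, hPx] at this
    simpa using this
end
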